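/- Let c' : Fin 6 → Fin 6 → Fin 5 be any proper edge-colouring of K₆, i.e., c' i j = c' j i for all i ≠ j, and for any vertex i and distinct vertices j, k both different from i one has c' i j ≠ c' i k. Then there exist a permutation φ ∈ Equiv.Perm (Fin 6) and a permutation σ ∈ Equiv.Perm (Fin 5) such that c' (φ i) (φ j) = σ (c i j) for all i ≠ j. (The edge labelling of K₆ by five labels in which each label class is a perfect matching is unique up to a permutation of the labels and of the vertices.) -/

import Mathlib

/-- The 1-factorization of `K₆`: the edge `{i, j}` of the complete graph on
`Fin 6` gets the colour `(i + j) mod 5` if `i, j ≤ 4`, and the edge `{i, 5}`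
gets the colour `(2 * i) mod 5`. -/
def c (i j : Fin 6) : Fin 5 :=
  if i.val = 5 then (Fin.ofNat 5 (2 * j.val : ℕ))
  else if j.val = 5 then (Fin.ofNat 5 (2 * i.val : ℕ))
  else (Fin.ofNat 5 (i.val + j.val : ℕ))

def D (x01 x02 x03 x04 x12 x13 x14 x23 x24 x34 : Fin 5) (i j : Fin 6) : Fin 5 :=
  match i.val, j.val with
  | 0, 1 => x01
  | 1, 0 => x01
  | 0, 2 => x02
  | 2, 0 => x02
  | 0, 3 => x03
  | 3, 0 => x03
  | 0, 4 => x04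
  | 4, 0 => x04
  | 1, 2 => x12
  | 2, 1 => x12
  | 1, 3 => x13
  | 3, 1 => x13
  | 1, 4 => x14
  | 4, 1 => x14
  | 2, 3 => x23
  | 3, 2 => x23
  | 2, 4 => x24
  | 4, 2 => x24
  | 3, 4 => x34
  | 4, 3 => x34
  | 0, 5 => 0
  | 5, 0 => 0
  | 1, 5 => 2
  | 5, 1 => 2
  | 2, 5 => 4
  | 5, 2 => 4
  | 3, 5 => 1
  | 5, 3 => 1
  | 4, 5 => 3
  | 5, 4 => 3
  | _, _ => 0

def p : Fin 6 → Fin 6 → Fin 6 :=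
  ![![0, 1, 2, 3, 4, 5],
    ![4, 2, 0, 5, 1, 3],
    ![1, 4, 5, 0, 3, 2],
    ![3, 5, 4, 2, 0, 1],
    ![2, 0, 3, 1, 5, 4],
    ![5, 3, 1, 4, 2, 0]]

set_option maxRecDepth 10000 in
set_option synthInstance.maxSize 10000 in
set_option maxHeartbeats 4000000 in
lemma key : ∀ x01 : Fin 5, x01 ≠ 0 → x01 ≠ 2 → ∀ x02 : Fin 5, x02 ≠ 0 → x02 ≠ 4 → x02 ≠ x01 → ∀ x03 : Fin 5, x03 ≠ 0 → x03 ≠ 1 → x03 ≠ x01 → x03 ≠ x02 → ∀ x04 : Fin 5, x04 ≠ 0 → x04 ≠ 3 → x04 ≠ x01 → x04 ≠ x02 → x04 ≠ x03 → ∀ x12 : Fin 5, x12 ≠ 2 → x12 ≠ 4 → x12 ≠ x01 → x12 ≠ x02 → ∀ x13 : Fin 5, x13 ≠ 2 → x13 ≠ 1 → x13 ≠ x01 → x13 ≠ x03 → x13 ≠ x12 → ∀ x14 : Fin 5, x14 ≠ 2 → x14 ≠ 3 → x14 ≠ x01 → x14 ≠ x04 → x14 ≠ x12 → x14 ≠ x13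 → ∀ x23 : Fin 5, x23 ≠ 4 → x23 ≠ 1 → x23 ≠ x02 → x23 ≠ x03 → x23 ≠ x12 → x23 ≠ x13 → ∀ x24 : Fin 5, x24 ≠ 4 → x24 ≠ 3 → x24 ≠ x02 → x24 ≠ x04 → x24 ≠ x12 → x24 ≠ x14 → x24 ≠ x23 → ∀ x34 : Fin 5, x34 ≠ 1 → x34 ≠ 3 → x34 ≠ x03 → x34 ≠ x04 → x34 ≠ x13 → x34 ≠ x14 → x34 ≠ x23 → x34 ≠ x24 → 
    ∃ n : Fin 6, ∀ i j : Fin 6, i ≠ j → D x01 x02 x03 x04 x12 x13 x14 x23 x24 x34 (p n i) (p n j) = c i j := by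
  decide +kernel

lemma pbij : ∀ n : Fin 6, Function.Bijective (p n) := by decide

/-- Any proper edge-colouring of `K₆` by five colours is equivalent to `c`
up to a permutation of the vertices and a permutation of the colours. -/
theorem properColouring_unique (c' : Fin 6 → Fin 6 → Fin 5)
    (hsymm : ∀ i j : Fin 6, i ≠ j → c' i j = c' j i)
    (hproper : ∀ i j k : Fin 6, j ≠ i → k ≠ i → j ≠ k → c' i j ≠ c' i k) :
    ∃ (φ : Equiv.Perm (Fin 6)) (σ : Equiv.Perm (Fin 5)),
      ∀ i j : Fin 6, i ≠ j → c' (φ i) (φ j) = σ (c i j) := by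
  set f : Fin 5 → Fin 5 := fun k => c' ⟨(3 * k.val) % 5, by omega⟩ 5 with hf
  have hfinj : Function.Injective f := by
    intro a b h
    by_contra hne
    exact hproper 5 ⟨(3 * a.val) % 5, by omega⟩ ⟨(3 * b.val) % 5, by omega⟩
      (by simp [Fin.ext_iff]; omega) (by simp [Fin.ext_iff]; omega)
      (by simp only [ne_eq, Fin.mk.injEq]; omega)
      (by rw [hsymm 5 _ (by simp [Fin.ext_iff]; omega), hsymm 5 _ (by simp [Fin.ext_iff]; omega)]; exact h)
  set σ₀ : Fin 5 ≃ Fin 5 := Equiv.ofBijective f (Finite.injective_iff_bijective.mp hfinj)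
    with hσ₀
  set d : Fin 6 → Fin 6 → Fin 5 := fun i j => σ₀.symm (c' i j) with hdd
  have hds : ∀ i j : Fin 6, i ≠ j → d i j = d j i := fun i j hij =>
    congrArg σ₀.symm (hsymm i j hij)
  have hd : ∀ i j k : Fin 6, j ≠ i → k ≠ i → j ≠ k → d i j ≠ d i k := fun i j k h1 h2 h3 h =>
    hproper i j k h1 h2 h3 (σ₀.symm.injective h)
  have hi5 : ∀ i : Fin 6, i.val < 5 → d i 5 = (Fin.ofNat 5 (2 * i.val : ℕ)) := by
    intro i hi
    have hval : (Fin.ofNat 5 (2 * i.val : ℕ)).val = (2 * i.val) % 5 := rfl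
    show σ₀.symm (c' i 5) = _
    rw [Equiv.symm_apply_eq]
    show c' i 5 = c' ⟨(3 * (Fin.ofNat 5 (2 * i.val : ℕ)).val) % 5, by omega⟩ 5
    have hidx : (⟨(3 * (Fin.ofNat 5 (2 * i.val : ℕ)).val) % 5, by omega⟩ : Fin 6) = i := by
      rw [Fin.ext_iff]
      show (3 * (Fin.ofNat 5 (2 * i.val : ℕ)).val) % 5 = i.val
      rw [hval]
      omega
    rw [hidx]
  have e0 : d 0 5 = 0 := (hi5 0 (by decide)).trans (by decide)
  have e1 : d 1 5 = 2 := (hi5 1 (by decide)).trans (by decide)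
  have e2 : d 2 5 = 4 := (hi5 2 (by decide)).trans (by decide)
  have e3 : d 3 5 = 1 := (hi5 3 (by decide)).trans (by decide)
  have e4 : d 4 5 = 3 := (hi5 4 (by decide)).trans (by decide)
  obtain ⟨n, hn⟩ :=
    key (d 0 1)
      (fun h => hd 0 1 5 (by decide) (by decide) (by decide) (h.trans e0.symm))
      (fun h => hd 1 0 5 (by decide) (by decide) (by decide) ((((hds 0 1 (by decide)).symm.trans h).trans e1.symm)))
      (d 0 2)
      (fun h => hd 0 2 5 (by decide) (by decide) (by decide) (h.trans e0.symm))
      (fun h => hd 2 0 5 (by decide) (by decide) (by decide) ((((hds 0 2 (by decide)).symm.trans h).trans e2.symm)))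
      (fun h => hd 0 2 1 (by decide) (by decide) (by decide) h)
      (d 0 3)
      (fun h => hd 0 3 5 (by decide) (by decide) (by decide) (h.trans e0.symm))
      (fun h => hd 3 0 5 (by decide) (by decide) (by decide) ((((hds 0 3 (by decide)).symm.trans h).trans e3.symm)))
      (fun h => hd 0 3 1 (by decide) (by decide) (by decide) h)
      (fun h => hd 0 3 2 (by decide) (by decide) (by decide) h)
      (d 0 4)
      (fun h => hd 0 4 5 (by decide) (by decide) (by decide) (h.trans e0.symm))
      (fun h => hd 4 0 5 (by decide) (by decide) (by decide) ((((hds 0 4 (by decide)).symm.trans h).trans e4.symm)))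
      (fun h => hd 0 4 1 (by decide) (by decide) (by decide) h)
      (fun h => hd 0 4 2 (by decide) (by decide) (by decide) h)
      (fun h => hd 0 4 3 (by decide) (by decide) (by decide) h)
      (d 1 2)
      (fun h => hd 1 2 5 (by decide) (by decide) (by decide) (h.trans e1.symm))
      (fun h => hd 2 1 5 (by decide) (by decide) (by decide) ((((hds 1 2 (by decide)).symm.trans h).trans e2.symm)))
      (fun h => hd 1 2 0 (by decide) (by decide) (by decide) (h.trans (hds 0 1 (by decide))))
      (fun h => hd 2 1 0 (by decide) (by decide) (by decide) (((hds 1 2 (by decide)).symm.trans h).trans (hds 0 2 (by decide))))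
      (d 1 3)
      (fun h => hd 1 3 5 (by decide) (by decide) (by decide) (h.trans e1.symm))
      (fun h => hd 3 1 5 (by decide) (by decide) (by decide) ((((hds 1 3 (by decide)).symm.trans h).trans e3.symm)))
      (fun h => hd 1 3 0 (by decide) (by decide) (by decide) (h.trans (hds 0 1 (by decide))))
      (fun h => hd 3 1 0 (by decide) (by decide) (by decide) (((hds 1 3 (by decide)).symm.trans h).trans (hds 0 3 (by decide))))
      (fun h => hd 1 3 2 (by decide) (by decide) (by decide) h)
      (d 1 4)
      (fun h => hd 1 4 5 (by decide) (by decide) (by decide) (h.trans e1.symm))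
      (fun h => hd 4 1 5 (by decide) (by decide) (by decide) ((((hds 1 4 (by decide)).symm.trans h).trans e4.symm)))
      (fun h => hd 1 4 0 (by decide) (by decide) (by decide) (h.trans (hds 0 1 (by decide))))
      (fun h => hd 4 1 0 (by decide) (by decide) (by decide) (((hds 1 4 (by decide)).symm.trans h).trans (hds 0 4 (by decide))))
      (fun h => hd 1 4 2 (by decide) (by decide) (by decide) h)
      (fun h => hd 1 4 3 (by decide) (by decide) (by decide) h)
      (d 2 3)
      (fun h => hd 2 3 5 (by decide) (by decide) (by decide) (h.trans e2.symm))
      (fun h => hd 3 2 5 (by decide) (by decide) (by decide) ((((hds 2 3 (by decide)).symm.trans h).trans e3.symm)))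
      (fun h => hd 2 3 0 (by decide) (by decide) (by decide) (h.trans (hds 0 2 (by decide))))
      (fun h => hd 3 2 0 (by decide) (by decide) (by decide) (((hds 2 3 (by decide)).symm.trans h).trans (hds 0 3 (by decide))))
      (fun h => hd 2 3 1 (by decide) (by decide) (by decide) (h.trans (hds 1 2 (by decide))))
      (fun h => hd 3 2 1 (by decide) (by decide) (by decide) (((hds 2 3 (by decide)).symm.trans h).trans (hds 1 3 (by decide))))
      (d 2 4)
      (fun h => hd 2 4 5 (by decide) (by decide) (by decide) (h.trans e2.symm))
      (fun h => hd 4 2 5 (by decide) (by decide) (by decide) ((((hds 2 4 (by decide)).symm.trans h).trans e4.symm)))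
      (fun h => hd 2 4 0 (by decide) (by decide) (by decide) (h.trans (hds 0 2 (by decide))))
      (fun h => hd 4 2 0 (by decide) (by decide) (by decide) (((hds 2 4 (by decide)).symm.trans h).trans (hds 0 4 (by decide))))
      (fun h => hd 2 4 1 (by decide) (by decide) (by decide) (h.trans (hds 1 2 (by decide))))
      (fun h => hd 4 2 1 (by decide) (by decide) (by decide) (((hds 2 4 (by decide)).symm.trans h).trans (hds 1 4 (by decide))))
      (fun h => hd 2 4 3 (by decide) (by decide) (by decide) h)
      (d 3 4)
      (fun h => hd 3 4 5 (by decide) (by decide) (by decide) (h.trans e3.symm))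
      (fun h => hd 4 3 5 (by decide) (by decide) (by decide) ((((hds 3 4 (by decide)).symm.trans h).trans e4.symm)))
      (fun h => hd 3 4 0 (by decide) (by decide) (by decide) (h.trans (hds 0 3 (by decide))))
      (fun h => hd 4 3 0 (by decide) (by decide) (by decide) (((hds 3 4 (by decide)).symm.trans h).trans (hds 0 4 (by decide))))
      (fun h => hd 3 4 1 (by decide) (by decide) (by decide) (h.trans (hds 1 3 (by decide))))
      (fun h => hd 4 3 1 (by decide) (by decide) (by decide) (((hds 3 4 (by decide)).symm.trans h).trans (hds 1 4 (by decide))))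
      (fun h => hd 3 4 2 (by decide) (by decide) (by decide) (h.trans (hds 2 3 (by decide))))
      (fun h => hd 4 3 2 (by decide) (by decide) (by decide) (((hds 3 4 (by decide)).symm.trans h).trans (hds 2 4 (by decide))))
  have hD : ∀ a b : Fin 6, a ≠ b →
      D (d 0 1) (d 0 2) (d 0 3) (d 0 4) (d 1 2) (d 1 3) (d 1 4) (d 2 3) (d 2 4) (d 3 4) a b
        = d a b := by
    intro a b hab
    fin_cases a <;> fin_cases b <;>
    first
      | exact absurd rfl hab
      | rfl
      | exact hds 0 1 (by decide)
      | exact hds 0 2 (by decide)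
      | exact hds 0 3 (by decide)
      | exact hds 0 4 (by decide)
      | exact hds 1 2 (by decide)
      | exact hds 1 3 (by decide)
      | exact hds 1 4 (by decide)
      | exact hds 2 3 (by decide)
      | exact hds 2 4 (by decide)
      | exact hds 3 4 (by decide)
      | exact e0.symm
      | exact e0.symm.trans (hds 0 5 (by decide))
      | exact e1.symm
      | exact e1.symm.trans (hds 1 5 (by decide))
      | exact e2.symm
      | exact e2.symm.trans (hds 2 5 (by decide))
      | exact e3.symm
      | exact e3.symm.trans (hds 3 5 (by decide))
      | exact e4.symm
      | exact e4.symm.trans (hds 4 5 (by decide))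
  refine ⟨Equiv.ofBijective (p n) (pbij n), σ₀, fun i j hij => ?_⟩
  have hpij : p n i ≠ p n j := fun h => hij ((pbij n).1 h)
  have h1 := hn i j hij
  rw [hD (p n i) (p n j) hpij] at h1
  show c' (p n i) (p n j) = σ₀ (c i j)
  rw [← h1]
  show c' (p n i) (p n j) = σ₀ (σ₀.symm (c' (p n i) (p n j)))
  rw [Equiv.apply_symm_apply]
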